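/- Let $F(X) = J X + b$ be an affine map on $\mathbb{R}^3$ with $J$ an invertible $3\times 3$ matrix, and let $\Phi : \mathbb{R}^3 \to \mathbb{R}^3$ be differentiable. Define the covariant Piola image $\phi = J^{-T} \Phi \circ F^{-1}$. Then for every $x \in \mathbb{R}^3$, $(\operatorname{curl} \phi)(x) = \frac{1}{\det J}\, J\, (\operatorname{curl} \Phi)(F^{-1}(x))$; that is, the curl of a covariantly mapped field is the contravariant Piola image of the curl. -/

import Mathlib

set_option maxHeartbeats 1000000

open Matrix

/-- The partial derivative `∂ᵢ f` of a scalar field `f : ℝ³ → ℝ`. -/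
noncomputable def pd3 (i : Fin 3) (f : (Fin 3 → ℝ) → ℝ) (x : Fin 3 → ℝ) : ℝ :=
  fderiv ℝ f x (Pi.single i 1)

/-- The curl `(∂₂v₃ - ∂₃v₂, ∂₃v₁ - ∂₁v₃, ∂₁v₂ - ∂₂v₁)` of a vector field
`v : ℝ³ → ℝ³` (with 0-based indexing). -/
noncomputable def curl3 (v : (Fin 3 → ℝ) → (Fin 3 → ℝ)) (x : Fin 3 → ℝ) : Fin 3 → ℝ :=
  ![pd3 1 (fun y => v y 2) x - pd3 2 (fun y => v y 1) x,
    pd3 2 (fun y => v y 0) x - pd3 0 (fun y => v y 2) x,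
    pd3 0 (fun y => v y 1) x - pd3 1 (fun y => v y 0) x]

private lemma clm_apply_eq_sum (D : (Fin 3 → ℝ) →L[ℝ] (Fin 3 → ℝ)) (v : Fin 3 → ℝ) :
    D v = ∑ m, v m • D (Pi.single m 1) := by
  have hv : v = ∑ m, v m • (Pi.single m 1 : Fin 3 → ℝ) := by
    funext j
    simp [Finset.sum_apply, Pi.single_apply, Finset.sum_ite_eq]
  nth_rewrite 1 [hv]
  simp

/-- Let `F(X) = J X + b` be affine on `ℝ³` with `J` invertible, and let
`Φ : ℝ³ → ℝ³` be differentiable. For the covariant Piola image `φ = (J⁻¹)ᵀ Φ ∘ F⁻¹`,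
one has `(curl φ)(x) = (det J)⁻¹ J (curl Φ)(F⁻¹ x)` for every `x`: the curl of a
covariantly mapped field is the contravariant Piola image of the curl. -/
theorem covariant_piola_curl_commutes
    (J : Matrix (Fin 3) (Fin 3) ℝ) (hJ : J.det ≠ 0)
    (b : Fin 3 → ℝ)
    (F : (Fin 3 → ℝ) → (Fin 3 → ℝ)) (hF : ∀ X, F X = J.mulVec X + b)
    (Finv : (Fin 3 → ℝ) → (Fin 3 → ℝ)) (hFinv : ∀ x, Finv x = J⁻¹.mulVec (x - b))
    (Φ : (Fin 3 → ℝ) → (Fin 3 → ℝ)) (hΦ : Differentiable ℝ Φ)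
    (φ : (Fin 3 → ℝ) → (Fin 3 → ℝ))
    (hφ : ∀ x, φ x = J⁻¹ᵀ.mulVec (Φ (Finv x))) :
    ∀ x, curl3 φ x = (J.det)⁻¹ • J.mulVec (curl3 Φ (Finv x)) := by
  intro x
  set K := J⁻¹ with hK
  have hφ' : φ = fun y => Kᵀ.mulVec (Φ (Finv y)) := funext hφ
  subst hφ'
  have hFinv' : Finv = fun y => K.mulVec (y - b) := funext hFinv
  subst hFinv'
  set Lc : (Fin 3 → ℝ) →L[ℝ] (Fin 3 → ℝ) := LinearMap.toContinuousLinearMap K.mulVecLin with hLc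
  set Tc : (Fin 3 → ℝ) →L[ℝ] (Fin 3 → ℝ) := LinearMap.toContinuousLinearMap Kᵀ.mulVecLin with hTc
  set z := K.mulVec (x - b) with hz
  set D := fderiv ℝ Φ z with hDdef
  have hDz : HasFDerivAt Φ D z := (hΦ z).hasFDerivAt
  have hLx : HasFDerivAt (fun y : Fin 3 → ℝ => K.mulVec (y - b)) Lc x := by
    have h1 : (fun y : Fin 3 → ℝ => K.mulVec (y - b)) = fun y => Lc y - Lc b := by
      funext y
      show K.mulVec (y - b) = K.mulVec y - K.mulVec b
      rw [Matrix.mulVec_sub]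
    rw [h1]
    exact Lc.hasFDerivAt.sub_const _
  have key : ∀ i j : Fin 3,
      pd3 i (fun y => Kᵀ.mulVec (Φ (K.mulVec (y - b))) j) x
        = ∑ l, ∑ m, Kᵀ j l * (K m i * D (Pi.single m 1) l) := by
    intro i j
    have hcomp : HasFDerivAt (fun y => Kᵀ.mulVec (Φ (K.mulVec (y - b))) j)
        ((ContinuousLinearMap.proj (R := ℝ) (φ := fun _ : Fin 3 => ℝ) j).comp
          (Tc.comp (D.comp Lc))) x :=
      (ContinuousLinearMap.proj (R := ℝ) (φ := fun _ : Fin 3 => ℝ) j).hasFDerivAt.comp x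
        (Tc.hasFDerivAt.comp x (hDz.comp x hLx))
    rw [pd3, hcomp.fderiv]
    show Kᵀ.mulVec (D (K.mulVec (Pi.single i 1))) j = _
    rw [Matrix.mulVec_single_one, show K.col i = fun m => K m i from rfl, clm_apply_eq_sum]
    simp only [Matrix.mulVec, dotProduct, Finset.sum_apply, Pi.smul_apply, smul_eq_mul,
      Finset.mul_sum, Fin.sum_univ_three]
    ring
  have keyΦ : ∀ m l : Fin 3, pd3 m (fun y => Φ y l) z = D (Pi.single m 1) l := by
    intro m l
    have h : HasFDerivAt (fun y => Φ y l)
        ((ContinuousLinearMap.proj (R := ℝ) (φ := fun _ : Fin 3 => ℝ) l).comp D) z :=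
      (ContinuousLinearMap.proj (R := ℝ) (φ := fun _ : Fin 3 => ℝ) l).hasFDerivAt.comp z hDz
    rw [pd3, h.fderiv]
    rfl
  have hdetK : K.det = (J.det)⁻¹ := by
    rw [hK, Matrix.det_nonsing_inv, Ring.inverse_eq_inv]
  have hKinv : K⁻¹ = J := Matrix.nonsing_inv_nonsing_inv J (isUnit_iff_ne_zero.mpr hJ)
  have hJeq : J = J.det • Matrix.adjugate K := by
    have h1 : K⁻¹ = J.det • Matrix.adjugate K := by
      rw [Matrix.inv_def, hdetK, Ring.inverse_eq_inv, inv_inv]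
    rw [← h1, hKinv]
  have hadj : (J.det)⁻¹ • J = Matrix.adjugate K := by
    nth_rewrite 2 [hJeq]
    rw [smul_smul, inv_mul_cancel₀ hJ, one_smul]
  have hRHS : (J.det)⁻¹ • J.mulVec (curl3 Φ z) = (Matrix.adjugate K).mulVec (curl3 Φ z) := by
    rw [← Matrix.smul_mulVec, hadj]
  rw [hRHS]
  funext i
  simp only [curl3, key, keyΦ]
  fin_cases i <;>
    simp only [Fin.zero_eta, Fin.mk_one, Fin.reduceFinMk, Matrix.adjugate_fin_three, Matrix.mulVec, dotProduct, Fin.sum_univ_three,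
      Matrix.cons_val_zero, Matrix.cons_val_one, Matrix.head_cons, Matrix.cons_val_two,
      Matrix.tail_cons, Matrix.transpose_apply, Fin.isValue, Matrix.cons_val', Matrix.empty_val',
      Matrix.cons_val_fin_one, Matrix.head_fin_const, Matrix.of_apply] <;>
    ring
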